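/- Let z1, z2, z3, z4 be complex numbers with z1 + z2 + z3 - z4 = 0 and z1 z2 z3 z4 ≠ 0. Define a1(t) = (z2 z4 + z3 t)/(z1 - t), a2(t) = (z1 z4 - z3 t)/(z2 + t), a3(t) = t. Then for any t, s in the domain (t ≠ z1, s ≠ z1, t ≠ -z2, s ≠ -z2, s ≠ 0, t ≠ 0), setting t' = -z1 z2 z4/(z3 s) and s' = -z1 z2 z4/(z3 t), we have a_k(t)/a_k(s) = a_k(t')/a_k(s') for k = 1, 2, 3. -/

import Mathlib

private lemma key_ratio (C a b : ℂ) (hC : C ≠ 0) : (C / a) / (C / b) = b / a := by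
  rw [div_div_div_comm, div_self hC, one_div_div]

theorem stmt_0 (z1 z2 z3 z4 : ℂ)
    (hsum : z1 + z2 + z3 - z4 = 0) (hz : z1 * z2 * z3 * z4 ≠ 0)
    (a1 : ℂ → ℂ) (a2 : ℂ → ℂ) (a3 : ℂ → ℂ)
    (ha1 : ∀ t, a1 t = (z2 * z4 + z3 * t) / (z1 - t))
    (ha2 : ∀ t, a2 t = (z1 * z4 - z3 * t) / (z2 + t))
    (ha3 : ∀ t, a3 t = t)
    (t s : ℂ) (ht1 : t ≠ z1) (hs1 : s ≠ z1) (ht2 : t ≠ -z2) (hs2 : s ≠ -z2)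
    (hs0 : s ≠ 0) (ht0 : t ≠ 0)
    (t' s' : ℂ) (ht' : t' = -(z1 * z2 * z4) / (z3 * s))
    (hs' : s' = -(z1 * z2 * z4) / (z3 * t)) :
    a1 t / a1 s = a1 t' / a1 s' ∧
    a2 t / a2 s = a2 t' / a2 s' ∧
    a3 t / a3 s = a3 t' / a3 s' := by
  have h1 : z1 ≠ 0 := by intro h; apply hz; rw [h]; ring
  have h2 : z2 ≠ 0 := by intro h; apply hz; rw [h]; ring
  have h3 : z3 ≠ 0 := by intro h; apply hz; rw [h]; ring
  have h4 : z4 ≠ 0 := by intro h; apply hz; rw [h]; ring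
  have k1 : ∀ x : ℂ, x ≠ 0 → x ≠ z1 →
      a1 (-(z1 * z2 * z4) / (z3 * x)) = (-(z2 * z3 * z4) / z1) / a1 x := by
    intro x hx0 hx1
    rw [ha1, ha1]
    by_cases hnum : z2 * z4 + z3 * x = 0
    · have hx : z1 - -(z1 * z2 * z4) / (z3 * x) = 0 := by
        have hh : z3 * x = -(z2 * z4) := by linear_combination hnum
        rw [hh]
        field_simp
        ring
      rw [hx, div_zero, hnum, zero_div, div_zero]
    · have hd : z1 - x ≠ 0 := sub_ne_zero.mpr (Ne.symm hx1)
      have hzx : z3 * x ≠ 0 := mul_ne_zero h3 hx0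
      have hA : z2 * z4 * z1 + z3 * x * z1 ≠ 0 := by
        intro h; apply hnum
        have h' : (z2 * z4 + z3 * x) * z1 = 0 := by linear_combination h
        rcases mul_eq_zero.mp h' with h'' | h''
        · exact h''
        · exact absurd h'' h1
      have hd2 : z1 - -(z1 * z2 * z4) / (z3 * x) ≠ 0 := by
        rw [sub_ne_zero]
        intro h
        apply hA
        field_simp at h
        linear_combination z1 * h
      rw [div_div_eq_mul_div, div_eq_div_iff hd2 hnum]
      field_simp
      ring
  have k2 : ∀ x : ℂ, x ≠ 0 → x ≠ -z2 →
      a2 (-(z1 * z2 * z4) / (z3 * x)) = (-(z1 * z3 * z4) / z2) / a2 x := by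
    intro x hx0 hx2
    rw [ha2, ha2]
    by_cases hnum : z1 * z4 - z3 * x = 0
    · have hx : z2 + -(z1 * z2 * z4) / (z3 * x) = 0 := by
        have hh : z3 * x = z1 * z4 := by linear_combination -hnum
        rw [hh]
        field_simp
        ring
      rw [hx, div_zero, hnum, zero_div, div_zero]
    · have hd : z2 + x ≠ 0 := by
        intro h; apply hx2; linear_combination h
      have hzx : z3 * x ≠ 0 := mul_ne_zero h3 hx0
      have hA : -(z1 * z4 * z2) + z3 * x * z2 ≠ 0 := by
        intro h; apply hnum
        have h' : (z1 * z4 - z3 * x) * z2 = 0 := by linear_combination -h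
        rcases mul_eq_zero.mp h' with h'' | h''
        · exact h''
        · exact absurd h'' h2
      have hd2 : z2 + -(z1 * z2 * z4) / (z3 * x) ≠ 0 := by
        intro h
        apply hA
        field_simp at h
        linear_combination h
      rw [div_div_eq_mul_div, div_eq_div_iff hd2 hnum]
      field_simp
      ring
  have k3 : ∀ x : ℂ, x ≠ 0 →
      a3 (-(z1 * z2 * z4) / (z3 * x)) = (-(z1 * z2 * z4) / z3) / a3 x := by
    intro x hx0
    rw [ha3, ha3, div_div]
  have hC1 : -(z2 * z3 * z4) / z1 ≠ 0 := by
    apply div_ne_zero _ h1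
    simpa using mul_ne_zero (mul_ne_zero h2 h3) h4
  have hC2 : -(z1 * z3 * z4) / z2 ≠ 0 := by
    apply div_ne_zero _ h2
    simpa using mul_ne_zero (mul_ne_zero h1 h3) h4
  have hC3 : -(z1 * z2 * z4) / z3 ≠ 0 := by
    apply div_ne_zero _ h3
    simpa using mul_ne_zero (mul_ne_zero h1 h2) h4
  refine ⟨?_, ?_, ?_⟩
  · rw [ht', hs', k1 s hs0 hs1, k1 t ht0 ht1, key_ratio _ _ _ hC1]
  · rw [ht', hs', k2 s hs0 hs2, k2 t ht0 ht2, key_ratio _ _ _ hC2]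
  · rw [ht', hs', k3 s hs0, k3 t ht0, key_ratio _ _ _ hC3]
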